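/- The Möbius map G_n(x) = (1+(n-1)x)/(1+nx) maps the closed disc {ξ ∈ ℂ : |ξ - 1| ≤ 3/4} into the closed disc {ξ ∈ ℂ : |ξ - 1| ≤ 2/3}, for every positive integer n. -/

import Mathlib

/-- For every positive integer `n`, the Möbius map `G_n(ξ) = (1+(n-1)ξ)/(1+nξ)`
maps the closed disc `{ξ : |ξ-1| ≤ 3/4}` into the closed disc `{ξ : |ξ-1| ≤ 2/3}`. -/
theorem mobius_maps_disc_into_disc (n : ℕ) (hn : 0 < n) (ξ : ℂ)
    (hξ : ‖ξ - 1‖ ≤ 3 / 4) :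
    ‖(1 + ((n : ℂ) - 1) * ξ) / (1 + (n : ℂ) * ξ) - 1‖ ≤ 2 / 3 := by
  set x := ξ.re with hx
  set y := ξ.im with hy
  have hn1 : (1:ℝ) ≤ (n:ℝ) := by exact_mod_cast hn
  -- constraint in coordinates
  have hc : (x - 1)^2 + y^2 ≤ 9/16 := by
    have h1 : ‖ξ - 1‖ ^ 2 ≤ (3/4:ℝ)^2 := by
      apply pow_le_pow_left₀ (norm_nonneg _) hξ
    rw [Complex.sq_norm, Complex.normSq_apply] at h1
    simp only [Complex.sub_re, Complex.sub_im, Complex.one_re, Complex.one_im] at h1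
    nlinarith [h1]
  -- denominator nonzero
  have hDsq : Complex.normSq (1 + (n:ℂ) * ξ) = (1 + n*x)^2 + (n*y)^2 := by
    rw [Complex.normSq_apply]
    simp [Complex.add_re, Complex.add_im, Complex.mul_re, Complex.mul_im]
    ring
  have hxlb : (1:ℝ)/4 ≤ x := by nlinarith [sq_nonneg y, sq_nonneg (x-1)]
  have h5 : (5/4:ℝ) ≤ 1 + n*x := by
    nlinarith [mul_le_mul_of_nonneg_left hxlb (le_trans zero_le_one hn1)]
  have hDpos : 0 < Complex.normSq (1 + (n:ℂ) * ξ) := by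
    rw [hDsq]
    nlinarith [sq_nonneg ((n:ℝ)*y), h5]
  have hD : (1 + (n:ℂ) * ξ) ≠ 0 := by
    intro h
    rw [h, Complex.normSq_zero] at hDpos
    exact lt_irrefl 0 hDpos
  have key : (1 + ((n : ℂ) - 1) * ξ) / (1 + (n : ℂ) * ξ) - 1 = -ξ / (1 + (n:ℂ) * ξ) := by
    field_simp
    ring
  rw [key, norm_div, norm_neg]
  rw [div_le_iff₀ (norm_pos_iff.2 hD)]
  have habs : ‖ξ‖ ^ 2 = x^2 + y^2 := by
    rw [Complex.sq_norm, Complex.normSq_apply]; ring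
  have habsD : ‖1 + (n:ℂ) * ξ‖ ^ 2 = (1 + n*x)^2 + (n*y)^2 := by
    rw [Complex.sq_norm, hDsq]
  have hsq : ‖ξ‖ ^ 2 ≤ (2 / 3 * ‖1 + (n:ℂ) * ξ‖)^2 := by
    rw [mul_pow, habs, habsD]
    nlinarith [sq_nonneg ((n-1)*(x-1/4)), sq_nonneg ((n-1)*y), sq_nonneg (x-1/4),
      mul_nonneg (sub_nonneg.2 hn1) (sub_nonneg.2 hxlb),
      mul_nonneg (mul_nonneg (sub_nonneg.2 hn1) (sub_nonneg.2 hn1)) (sub_nonneg.2 hxlb),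
      sq_nonneg y, sq_nonneg (n*y)]
  exact le_of_pow_le_pow_left₀ (by norm_num) (by positivity) hsq
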